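/- arXiv:2512.08468 — 2 statements merged into one kernel-verified Lean document; each statement's English description precedes it below -/
import Mathlib

section
/- Assume the pre-diffeo-valued field structure is dense. Then O ≠ K, and every fiber of d is dense in O: for every y ∈ k, every a ∈ O, and every γ ∈ Γ, there exists r ∈ R with d(r) = y and v(a − r) > γ. -/
/-- `q : K` is algebraic over the prime field `𝔽_p`. -/
def AlgebraicOverPrime (p : ℕ) {K : Type*} [Field K] [CharP K p] (q : K) : Prop :=
  ∃ f : Polynomial (ZMod p), f ≠ 0 ∧ Polynomial.eval₂ (ZMod.castHom dvd_rfl K) q f = 0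

/-- A pre-diffeo-valued field structure on a field `K` of characteristic `p`,
with value group `Γ`, residue field `k` and mock `K/M` module `D`.
Maps defined on subrings (`res`, `d`, `π`, the scalar action of `O` on `D`) are
encoded as total functions whose behaviour is only constrained on the relevant subring. -/
structure PreDiffeoValued (p : ℕ) (K : Type*) [Field K]
    (Γ : Type*) [AddCommGroup Γ] [LinearOrder Γ] [IsOrderedAddMonoid Γ]
    (k : Type*) [Field k] (D : Type*) [AddCommGroup D] where
  /-- the valuation, with `⊤` playing the role of `∞` -/
  v : K → WithTop Γ
  v_surj : ∀ γ : Γ, ∃ x : K, v x = (γ : WithTop Γ)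
  v_eq_top_iff : ∀ x : K, v x = ⊤ ↔ x = 0
  v_mul : ∀ x y : K, v (x * y) = v x + v y
  v_add : ∀ x y : K, min (v x) (v y) ≤ v (x + y)
  /-- the valuation ring `O = {x : v x ≥ 0}` (with maximal ideal `M = {x : v x > 0}`) -/
  O : Subring K
  mem_O_iff : ∀ x : K, x ∈ O ↔ 0 ≤ v x
  /-- the residue map `O → k` -/
  res : K → k
  res_add : ∀ x ∈ O, ∀ y ∈ O, res (x + y) = res x + res y
  res_mul : ∀ x ∈ O, ∀ y ∈ O, res (x * y) = res x * res y
  res_one : res 1 = 1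
  res_surjective : ∀ z : k, ∃ x ∈ O, res x = z
  res_eq_zero_iff : ∀ x ∈ O, (res x = 0 ↔ 0 < v x)
  /-- the scalar action of `O` on `D` -/
  smul : K → D → D
  smul_add : ∀ a ∈ O, ∀ x y : D, smul a (x + y) = smul a x + smul a y
  add_smul : ∀ a ∈ O, ∀ b ∈ O, ∀ x : D, smul (a + b) x = smul a x + smul b x
  mul_smul : ∀ a ∈ O, ∀ b ∈ O, ∀ x : D, smul (a * b) x = smul a (smul b x)
  one_smul : ∀ x : D, smul 1 x = x
  /-- `D` is a divisible `O`-module -/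
  divisible : ∀ a ∈ O, a ≠ 0 → ∀ y : D, ∃ x : D, smul a x = y
  /-- any two elements of `D` are comparable under the divisibility order -/
  total : ∀ x y : D, (∃ a ∈ O, x = smul a y) ∨ (∃ a ∈ O, y = smul a x)
  /-- the `O`-module embedding of the residue field `k` into `D` -/
  phi : k → D
  phi_add : ∀ z w : k, phi (z + w) = phi z + phi w
  phi_injective : Function.Injective phi
  phi_smul : ∀ a ∈ O, ∀ z : k, phi (res a * z) = smul a (phi z)
  /-- the subring `R ⊆ O` -/
  R : Subring K
  R_le_O : (R : Set K) ⊆ (O : Set K)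
  /-- the surjective derivation `d : R → k`, with `Q = ker d` -/
  d : K → k
  d_add : ∀ x ∈ R, ∀ y ∈ R, d (x + y) = d x + d y
  d_leibniz : ∀ x ∈ R, ∀ y ∈ R, d (x * y) = res x * d y + res y * d x
  d_surjective : ∀ z : k, ∃ x ∈ R, d x = z
  /-- the surjective `Q`-module map `π : O → D` with kernel `Q` -/
  pi : K → D
  pi_add : ∀ x ∈ O, ∀ y ∈ O, pi (x + y) = pi x + pi y
  pi_qsmul : ∀ q ∈ R, d q = 0 → ∀ x ∈ O, pi (q * x) = smul q (pi x)
  pi_surjective : ∀ y : D, ∃ x ∈ O, pi x = y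
  pi_eq_zero_iff : ∀ x ∈ O, (pi x = 0 ↔ x ∈ R ∧ d x = 0)
  pi_eq_phi_d : ∀ x ∈ R, pi x = phi (d x)
  /-- in characteristic `2`, squares of elements of `O` lie in `Q` -/
  char_two_sq : p = 2 → ∀ a ∈ O, a ^ 2 ∈ R ∧ d (a ^ 2) = 0
  /-- in odd characteristic, `π` is a derivation -/
  char_odd_pi : p ≠ 2 → ∀ a ∈ O, ∀ b ∈ O, pi (a * b) = smul a (pi b) + smul b (pi a)

namespace PreDiffeoValued

variable {p : ℕ} {K : Type*} [Field K] {Γ : Type*} [AddCommGroup Γ] [LinearOrder Γ] [IsOrderedAddMonoid Γ]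
  {k : Type*} [Field k] {D : Type*} [AddCommGroup D]

/-- The constant ring `Q = ker d`, as a subset of `K`. -/
def Q (P : PreDiffeoValued p K Γ k D) : Set K := {x | x ∈ P.R ∧ P.d x = 0}

/-- The pre-diffeo-valued structure is dense: `Q` is dense in `O` for the valuation topology. -/
def IsDense (P : PreDiffeoValued p K Γ k D) : Prop :=
  ∀ a ∈ P.O, ∀ γ : Γ, ∃ q ∈ P.Q, (γ : WithTop Γ) < P.v (a - q)

end PreDiffeoValued

/-- If the pre-diffeo-valued field structure is dense, then `O ≠ K`
and every fiber of `d` is dense in `O`: for every `y ∈ k`, `a ∈ O` and `γ ∈ Γ` there is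
`r ∈ R` with `d r = y` and `v (a - r) > γ`. -/
theorem O_ne_K_and_fibers_of_d_dense
    {p : ℕ} (hp : p.Prime) {K : Type*} [Field K] [CharP K p]
    {Γ : Type*} [AddCommGroup Γ] [LinearOrder Γ] [IsOrderedAddMonoid Γ]
    {k : Type*} [Field k] {D : Type*} [AddCommGroup D]
    (P : PreDiffeoValued p K Γ k D)
    (hdense : P.IsDense) :
    ((P.O : Set K) ≠ Set.univ) ∧
    (∀ y : k, ∀ a ∈ P.O, ∀ γ : Γ,
      ∃ r ∈ P.R, P.d r = y ∧ (γ : WithTop Γ) < P.v (a - r)) := by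
  have v_one : P.v 1 = 0 := by
    have h1 : P.v 1 ≠ ⊤ := fun h => one_ne_zero ((P.v_eq_top_iff 1).mp h)
    obtain ⟨g, hg⟩ := WithTop.ne_top_iff_exists.mp h1
    have := P.v_mul 1 1
    rw [one_mul, ← hg] at this
    have hgg : g = g + g := by exact_mod_cast this
    have hg0 : g = 0 := by
      have h' : g + 0 = g + g := by rw [add_zero]; exact hgg
      exact (add_left_cancel h').symm
    rw [← hg, hg0]; rfl
  constructor
  · intro hO
    -- every element is in O, so every γ : Γ is 0
    have hΓ : ∀ γ : Γ, γ = 0 := by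
      intro γ
      obtain ⟨x, hx⟩ := P.v_surj γ
      have hx0 : x ≠ 0 := by
        intro h; rw [h, (P.v_eq_top_iff 0).mpr rfl] at hx; exact (WithTop.coe_ne_top hx.symm)
      have hxi : P.v x⁻¹ = ((-γ : Γ) : WithTop Γ) := by
        have := P.v_mul x x⁻¹
        rw [mul_inv_cancel₀ hx0, v_one, hx] at this
        obtain ⟨g, hg⟩ := WithTop.ne_top_iff_exists.mp
          (show P.v x⁻¹ ≠ ⊤ from fun h => inv_ne_zero hx0 ((P.v_eq_top_iff _).mp h))
        rw [← hg] at this ⊢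
        have h' : γ + g = 0 := by exact_mod_cast this.symm
        have : g = -γ := eq_neg_of_add_eq_zero_right h'
        rw [this]
      have h1 : (0 : WithTop Γ) ≤ P.v x := by
        rw [← P.mem_O_iff]
        have : x ∈ (P.O : Set K) := by rw [hO]; trivial
        exact this
      have h2 : (0 : WithTop Γ) ≤ P.v x⁻¹ := by
        rw [← P.mem_O_iff]
        have : x⁻¹ ∈ (P.O : Set K) := by rw [hO]; trivial
        exact this
      rw [hx] at h1; rw [hxi] at h2
      have h1' : (0 : Γ) ≤ γ := by exact_mod_cast h1
      have h2' : (0 : Γ) ≤ -γ := by exact_mod_cast h2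
      exact le_antisymm (neg_nonneg.mp h2') h1'
    -- density at γ = 0 forces O ⊆ Q
    obtain ⟨x, hxR, hxd⟩ := P.d_surjective 1
    have hxO : x ∈ (P.O : Set K) := by rw [hO]; trivial
    obtain ⟨q, ⟨hqR, hqd⟩, hv⟩ := hdense x hxO 0
    have hxq : x = q := by
      by_contra hne
      have hnz : x - q ≠ 0 := sub_ne_zero.mpr hne
      have hvt : P.v (x - q) ≠ ⊤ := fun h => hnz ((P.v_eq_top_iff _).mp h)
      obtain ⟨g, hg⟩ := WithTop.ne_top_iff_exists.mp hvt
      rw [← hg] at hv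
      have : (0 : Γ) < g := by exact_mod_cast hv
      rw [hΓ g] at this
      exact lt_irrefl 0 this
    rw [hxq, hqd] at hxd
    exact one_ne_zero hxd.symm
  · intro y a ha γ
    obtain ⟨r0, hr0R, hr0d⟩ := P.d_surjective y
    have hr0O : r0 ∈ P.O := P.R_le_O hr0R
    obtain ⟨q, ⟨hqR, hqd⟩, hv⟩ := hdense (a - r0) (sub_mem ha hr0O) γ
    refine ⟨r0 + q, add_mem hr0R hqR, ?_, ?_⟩
    · rw [P.d_add r0 hr0R q hqR, hr0d, hqd, add_zero]
    · have : a - (r0 + q) = a - r0 - q := by ring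
      rw [this]; exact hv
end

section
/- If α ∈ K is wild, then α + 1 ≠ 0 and β := α/(α + 1) is wild. -/
/-- `α ∈ K` is wild with respect to the subring `R`: `α ∉ R` and `(α - q)⁻¹ ∉ R` for
every `q` in the relative algebraic closure `k₀` of `𝔽₂` in `K` with `q ≠ α`. -/
def IsWild {K : Type*} [Field K] [CharP K 2] (R : Subring K) (α : K) : Prop :=
  α ∉ R ∧ ∀ q : K, AlgebraicOverPrime 2 q → q ≠ α → (α - q)⁻¹ ∉ R

section Aux
attribute [local instance] ZMod.algebra

lemma aop_iff {K : Type*} [Field K] [CharP K 2] (q : K) :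
    AlgebraicOverPrime 2 q ↔ IsAlgebraic (ZMod 2) q := by
  unfold AlgebraicOverPrime IsAlgebraic
  constructor
  · rintro ⟨f, hf, he⟩
    exact ⟨f, hf, by rw [Polynomial.aeval_def]; exact he⟩
  · rintro ⟨f, hf, he⟩
    exact ⟨f, hf, by rw [Polynomial.aeval_def] at he; exact he⟩

lemma aop_one {K : Type*} [Field K] [CharP K 2] : AlgebraicOverPrime 2 (1:K) :=
  (aop_iff _).2 isAlgebraic_one

lemma aop_add {K : Type*} [Field K] [CharP K 2] {q r : K}
    (h : AlgebraicOverPrime 2 q) (h2 : AlgebraicOverPrime 2 r) :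
    AlgebraicOverPrime 2 (q + r) := by
  rw [aop_iff] at *
  rw [isAlgebraic_iff_isIntegral] at *
  exact h.add h2

lemma aop_mul {K : Type*} [Field K] [CharP K 2] {q r : K}
    (h : AlgebraicOverPrime 2 q) (h2 : AlgebraicOverPrime 2 r) :
    AlgebraicOverPrime 2 (q * r) := by
  rw [aop_iff] at *
  rw [isAlgebraic_iff_isIntegral] at *
  exact h.mul h2

lemma aop_inv {K : Type*} [Field K] [CharP K 2] {q : K}
    (h : AlgebraicOverPrime 2 q) : AlgebraicOverPrime 2 q⁻¹ := by
  rw [aop_iff] at *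
  exact h.inv

lemma aop_div {K : Type*} [Field K] [CharP K 2] {q r : K}
    (h : AlgebraicOverPrime 2 q) (h2 : AlgebraicOverPrime 2 r) :
    AlgebraicOverPrime 2 (q / r) := by
  rw [div_eq_mul_inv]
  exact aop_mul h (aop_inv h2)

end Aux

/-- Let `K` be a field of characteristic 2 and `R` a subring of `K`
containing `k₀ = 𝔽₂^alg ∩ K`.  If `α ∈ K` is wild, then `α + 1 ≠ 0` and
`β := α / (α + 1)` is wild. -/
theorem wild_fractional_linear
    {K : Type*} [Field K] [CharP K 2]
    (R : Subring K)
    (hk0 : ∀ q : K, AlgebraicOverPrime 2 q → q ∈ R) :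
    ∀ α : K, IsWild R α → α + 1 ≠ 0 ∧ IsWild R (α / (α + 1)) := by
  intro α ⟨hαR, hαq⟩
  have h2 : (2 : K) = 0 := by exact_mod_cast CharP.cast_eq_zero K 2
  have h1R : (1 : K) ∈ R := hk0 1 aop_one
  have h1α : (1 : K) ≠ α := fun h => hαR (h ▸ h1R)
  have hα1 : α + 1 ≠ 0 := by
    intro h
    have : α = 1 := by linear_combination h - h2
    exact hαR (this ▸ h1R)
  refine ⟨hα1, ?_, ?_⟩
  · -- β ∉ R
    intro hβ
    apply hαq 1 aop_one h1α
    have : (α - 1)⁻¹ = α / (α + 1) - 1 :=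
      inv_eq_of_mul_eq_one_right (by field_simp; linear_combination -α * h2)
    rw [this]
    exact R.sub_mem hβ h1R
  · intro q hq hqβ
    by_cases hq1 : q = 1
    · subst hq1
      intro habs
      have : (α / (α + 1) - 1)⁻¹ = α + 1 :=
        inv_eq_of_mul_eq_one_right (by field_simp; linear_combination (-1 : K) * h2)
      rw [this] at habs
      exact hαR (by have := R.sub_mem habs h1R; simpa using this)
    · have hq1' : q + 1 ≠ 0 := by
        intro h; exact hq1 (by linear_combination h - h2)
      set q' : K := q / (q + 1) with hq'def
      have hq'alg : AlgebraicOverPrime 2 q' := aop_div hq (aop_add hq aop_one)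
      have hq'α : q' ≠ α := by
        intro h
        rw [hq'def, div_eq_iff hq1'] at h
        apply hqβ
        rw [eq_div_iff hα1]
        linear_combination h + α * q * h2
      intro habs
      apply hαq q' hq'alg hq'α
      have hβq : α / (α + 1) - q ≠ 0 := sub_ne_zero.mpr (Ne.symm hqβ)
      have key : (α - q')⁻¹ = ((α / (α + 1) - q)⁻¹ + (q + 1)⁻¹) * (q + 1) ^ 2 := by
        apply inv_eq_of_mul_eq_one_right
        have hs : α / (α + 1) - q = (α - q * α - q) / (α + 1) := by field_simp; ring
        have hd : α - q * α - q ≠ 0 := by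
          rw [hs] at hβq; exact fun h => hβq (by rw [h, zero_div])
        rw [hq'def, hs, inv_div]
        have hd' : α * (1 - q) - q ≠ 0 := by rw [show α * (1 - q) - q = α - q * α - q by ring]; exact hd
        field_simp
        linear_combination (α ^ 2 * (1 + q)) * h2
      rw [key]
      have hqinv : (q + 1)⁻¹ ∈ R := hk0 _ (aop_inv (aop_add hq aop_one))
      have hqsq : (q + 1) ^ 2 ∈ R := pow_mem (hk0 _ (aop_add hq aop_one)) 2
      exact R.mul_mem (R.add_mem habs hqinv) hqsq
end
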